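/- Let z* optimize Leader-Opt and let q* be a probability distribution over K-sized subsets of A_{z*} with marginals p_a = 1 − g'_a(z*_a)/θ_{z*}. Then z* maximizes the expected number of successfully stuffed votes against q*, i.e., z* solves max_z ∑_{a∈A_{z*}} (1−p_a) z_a + ∑_{b∈B_{z*}} z_b + ∑_{c∈C_{z*}} z_c subject to ∑_j g_j(z_j) ≤ G, z ≥ 0. Consequently (z*, q*) is a Nash equilibrium of the Ballot Stuffing Game. -/

import Mathlib

open Finset

/-- Sum of the `J - K` smallest coordinates of `z`: the infimum of sums over
`(J-K)`-element subsets of coordinates. -/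
noncomputable def sumSmallest (J K : ℕ) (z : Fin J → ℝ) : ℝ :=
  sInf {s : ℝ | ∃ S : Finset (Fin J), S.card = J - K ∧ s = ∑ i ∈ S, z i}

/-- Feasible stuffing vectors: nonnegative, total cost at most `G`. -/
def Feasible (J : ℕ) (g : Fin J → ℝ → ℝ) (G : ℝ) : Set (Fin J → ℝ) :=
  {z | (∀ j, 0 ≤ z j) ∧ ∑ j, g j (z j) ≤ G}

lemma le_sumSmallest {J K : ℕ} (z : Fin J → ℝ) {b : ℝ}
    (h : ∀ S : Finset (Fin J), S.card = J - K → b ≤ ∑ i ∈ S, z i) :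
    b ≤ sumSmallest J K z := by
  apply le_csInf
  · obtain ⟨S, -, hS⟩ := Finset.exists_subset_card_eq (s := (Finset.univ : Finset (Fin J))) (n := J - K)
      (by simp)
    exact ⟨_, S, hS, rfl⟩
  · rintro s ⟨S, hS, rfl⟩; exact h S hS

lemma sumSmallest_le {J K : ℕ} (z : Fin J → ℝ) {S : Finset (Fin J)} (hS : S.card = J - K) :
    sumSmallest J K z ≤ ∑ i ∈ S, z i := by
  apply csInf_le
  · refine ⟨-∑ i, |z i|, ?_⟩
    rintro s ⟨T, hT, rfl⟩
    have h1 : ∑ i ∈ T, |z i| ≤ ∑ i, |z i| :=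
      Finset.sum_le_sum_of_subset_of_nonneg (Finset.subset_univ T)
        (fun i _ _ => abs_nonneg _)
    have h2 : -∑ i ∈ T, |z i| ≤ ∑ i ∈ T, z i := by
      rw [← Finset.sum_neg_distrib]
      exact Finset.sum_le_sum fun i _ => neg_abs_le _
    linarith
  · exact ⟨S, hS, rfl⟩

lemma sumSmallest_ge {J K : ℕ} (hKJ : K ≤ J) (w : Fin J → ℝ) {Mw : ℝ}
    (hMw : ∀ j, w j ≤ Mw) : (∑ j, w j) - K * Mw ≤ sumSmallest J K w := by
  apply le_sumSmallest
  intro S hS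
  have hcompl : ∑ i ∈ Sᶜ, w i + ∑ i ∈ S, w i = ∑ i, w i := Finset.sum_compl_add_sum S w
  have hcard : (Sᶜ : Finset (Fin J)).card = K := by
    rw [Finset.card_compl, hS]
    simp
    omega
  have hle : ∑ i ∈ Sᶜ, w i ≤ K * Mw := by
    calc ∑ i ∈ Sᶜ, w i ≤ (Sᶜ.card : ℕ) • Mw :=
          Finset.sum_le_card_nsmul _ _ _ (fun i _ => hMw i)
      _ = K * Mw := by rw [hcard, nsmul_eq_mul]
  linarith

lemma grad_ineq {f : ℝ → ℝ} (hf : ConvexOn ℝ (Set.Ici 0) f) (hd : Differentiable ℝ f)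
    {x y : ℝ} (hx : 0 ≤ x) (hy : 0 ≤ y) :
    f x + deriv f x * (y - x) ≤ f y := by
  rcases lt_trichotomy x y with h | h | h
  · have := hf.deriv_le_slope hx hy h (hd x)
    rw [slope_def_field] at this
    have hxy : (0:ℝ) < y - x := by linarith
    rw [le_div_iff₀ hxy] at this
    nlinarith [this]
  · simp [h]
  · have := hf.slope_le_deriv hy hx h (hd x)
    rw [slope_def_field] at this
    have hxy : (0:ℝ) < x - y := by linarith
    rw [div_le_iff₀ hxy] at this
    nlinarith [this]


set_option maxHeartbeats 1000000 in
/-- `(z*, q*)` is a Nash equilibrium: `z*` maximizes the expected number of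
successfully stuffed votes against the mixed strategy `q*` of the inspector,
and `q*` is a best response to `z*`. -/
theorem stmt9 (J K : ℕ) (g : Fin J → ℝ → ℝ) (G : ℝ)
    (hK0 : 0 < K) (hK : K < J) (hG : 0 < G)
    (hconv : ∀ j, StrictConvexOn ℝ (Set.Ici 0) (g j))
    (hdiff : ∀ j, Differentiable ℝ (g j))
    (hmono : ∀ j, StrictMonoOn (g j) (Set.Ici (0 : ℝ)))
    (hzero : ∀ j, g j 0 = 0)
    (z : Fin J → ℝ)
    (A B C : Finset (Fin J)) (θ : ℝ) (p : Fin J → ℝ) (q : Finset (Fin J) → ℝ)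
    (hA : A = Finset.univ.filter fun i => ∀ j, z j ≤ z i)
    (hB : B = Finset.univ.filter fun i => 0 < z i ∧ ∃ j, z i < z j)
    (hC : C = Finset.univ.filter fun i => z i = 0)
    (hAK : K < A.card)
    (hθ : θ = (∑ j ∈ A, deriv (g j) (z j)) / ((A.card : ℝ) - K))
    (hfeas : z ∈ Feasible J g G)
    (hmax : ∀ w ∈ Feasible J g G, sumSmallest J K w ≤ sumSmallest J K z)
    (hp : ∀ a, p a = 1 - deriv (g a) (z a) / θ)
    (hq0 : ∀ S, 0 ≤ q S)
    (hqsupp : ∀ S, q S ≠ 0 → S.card = K ∧ S ⊆ A)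
    (hq1 : ∑ S : Finset (Fin J), q S = 1)
    (hqmarg : ∀ a ∈ A,
      ∑ S ∈ Finset.univ.filter (fun S : Finset (Fin J) => a ∈ S), q S = p a) :
    -- z* is a best response to q*: it maximizes the expected number of
    -- successfully stuffed votes
    (∀ w ∈ Feasible J g G,
      ∑ a ∈ A, (1 - p a) * w a + ∑ b ∈ B, w b + ∑ c ∈ C, w c ≤
      ∑ a ∈ A, (1 - p a) * z a + ∑ b ∈ B, z b + ∑ c ∈ C, z c) ∧
    -- Nash equilibrium: no unilateral deviation of P₁
    (∀ w ∈ Feasible J g G,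
      ∑ S : Finset (Fin J), q S * ∑ j ∈ Sᶜ, w j ≤
      ∑ S : Finset (Fin J), q S * ∑ j ∈ Sᶜ, z j) ∧
    -- no unilateral deviation of P_A (who minimizes)
    (∀ T : Finset (Fin J), T.card = K →
      ∑ S : Finset (Fin J), q S * ∑ j ∈ Sᶜ, z j ≤ ∑ j ∈ Tᶜ, z j) := by
  have hz0 : ∀ j, 0 ≤ z j := hfeas.1
  have hzG : ∑ j, g j (z j) ≤ G := hfeas.2
  have hKJ : K ≤ J := le_of_lt hK
  -- the maximal value M
  obtain ⟨a₀, ha₀A⟩ : A.Nonempty := Finset.card_pos.mp (lt_of_le_of_lt (Nat.zero_le K) hAK)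
  set M := z a₀ with hM
  have hAmem : ∀ i, i ∈ A ↔ ∀ j, z j ≤ z i := by simp [hA]
  have hMmax : ∀ j, z j ≤ M := (hAmem a₀).mp ha₀A
  have hzA : ∀ a ∈ A, z a = M :=
    fun a ha => le_antisymm (hMmax a) (((hAmem a).mp ha) a₀)
  have hnotA : ∀ i, i ∉ A ↔ z i < M := by
    intro i
    constructor
    · intro hi
      rcases lt_or_eq_of_le (hMmax i) with h | h
      · exact h
      · exact absurd ((hAmem i).mpr (fun j => h ▸ hMmax j)) hi
    · intro hlt hi
      exact absurd (hzA i hi) (ne_of_lt hlt)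
  -- M is positive
  have hMpos : 0 < M := by
    by_contra hM0
    push_neg at hM0
    have hz_eq : ∀ j, z j = 0 := fun j => le_antisymm (le_trans (hMmax j) hM0) (hz0 j)
    obtain ⟨S, -, hS⟩ := Finset.exists_subset_card_eq (s := (Finset.univ : Finset (Fin J))) (n := J - K)
      (by simp)
    have h1 : sumSmallest J K z ≤ 0 := by
      have := sumSmallest_le z hS
      simpa [hz_eq] using this
    have hcont : Continuous (fun ε : ℝ => ∑ j : Fin J, g j ε) :=
      continuous_finset_sum _ fun j _ => (hdiff j).continuous
    have h0 : Filter.Tendsto (fun ε : ℝ => ∑ j : Fin J, g j ε) (nhds 0)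
        (nhds (∑ j : Fin J, g j 0)) := hcont.tendsto 0
    have h0' : (∑ j : Fin J, g j 0) < G := by simpa [hzero] using hG
    have hev : ∀ᶠ ε in nhdsWithin (0:ℝ) (Set.Ioi 0), (∑ j : Fin J, g j ε) < G :=
      (h0.eventually_lt_const h0').filter_mono nhdsWithin_le_nhds
    obtain ⟨ε, hεG, hε⟩ := (hev.and self_mem_nhdsWithin).exists
    have hε0 : (0:ℝ) < ε := hε
    have hwfeas : (fun _ : Fin J => ε) ∈ Feasible J g G := ⟨fun _ => hε0.le, hεG.le⟩
    have hlow : ((J - K : ℕ) : ℝ) * ε ≤ sumSmallest J K (fun _ => ε) := by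
      apply le_sumSmallest
      intro S hS
      rw [Finset.sum_const, hS, nsmul_eq_mul]
    have hJK : (0:ℝ) < ((J - K : ℕ) : ℝ) := by
      have : 0 < J - K := by omega
      exact_mod_cast this
    have := hmax _ hwfeas
    nlinarith
  -- membership characterizations
  have hBmem : ∀ i, i ∈ B ↔ 0 < z i ∧ z i < M := by
    intro i
    simp only [hB, Finset.mem_filter, Finset.mem_univ, true_and]
    constructor
    · rintro ⟨h1, j, hj⟩
      exact ⟨h1, lt_of_lt_of_le hj (hMmax j)⟩
    · rintro ⟨h1, h2⟩
      exact ⟨h1, a₀, h2⟩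
  have hCmem : ∀ i, i ∈ C ↔ z i = 0 := by simp [hC]
  -- partition
  have hdisjAB : Disjoint A B := by
    rw [Finset.disjoint_left]
    intro i hiA hiB
    have := ((hBmem i).mp hiB).2
    rw [hzA i hiA] at this
    exact lt_irrefl _ this
  have hdisjAC : Disjoint A C := by
    rw [Finset.disjoint_left]
    intro i hiA hiC
    have := (hCmem i).mp hiC
    rw [hzA i hiA] at this
    exact absurd this (ne_of_gt hMpos)
  have hdisjBC : Disjoint B C := by
    rw [Finset.disjoint_left]
    intro i hiB hiC
    have := ((hBmem i).mp hiB).1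
    rw [(hCmem i).mp hiC] at this
    exact lt_irrefl _ this
  have hunion : A ∪ B ∪ C = Finset.univ := by
    apply Finset.eq_univ_of_forall
    intro i
    simp only [Finset.mem_union]
    by_cases hiA : i ∈ A
    · exact Or.inl (Or.inl hiA)
    · rcases eq_or_lt_of_le (hz0 i) with h | h
      · exact Or.inr ((hCmem i).mpr h.symm)
      · exact Or.inl (Or.inr ((hBmem i).mpr ⟨h, (hnotA i).mp hiA⟩))
  have hsplit : ∀ F : Fin J → ℝ,
      ∑ j, F j = ∑ j ∈ A, F j + ∑ j ∈ B, F j + ∑ j ∈ C, F j := by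
    intro F
    rw [← hunion, Finset.sum_union (Finset.disjoint_union_left.mpr ⟨hdisjAC, hdisjBC⟩),
      Finset.sum_union hdisjAB]
  -- derivative positivity
  have hder_pos : ∀ j (x : ℝ), 0 < x → 0 < deriv (g j) x := by
    intro j x hx
    have hslope := (hconv j).slope_lt_deriv Set.self_mem_Ici (Set.mem_Ici.mpr hx.le)
      hx (hdiff j x)
    rw [slope_def_field] at hslope
    have hgx : 0 < g j x := by
      have := hmono j Set.self_mem_Ici (Set.mem_Ici.mpr hx.le) hx
      rwa [hzero j] at this
    have : 0 < (g j x - g j 0) / (x - 0) := by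
      rw [hzero j, sub_zero, sub_zero]
      exact div_pos hgx hx
    linarith
  have hder_nonneg : ∀ j (x : ℝ), 0 ≤ x → 0 ≤ deriv (g j) x := by
    intro j x hx
    have hd := hasDerivAt_iff_tendsto_slope.mp (hdiff j x).hasDerivAt
    have hsub : Set.Ioi x ⊆ {x}ᶜ := fun y hy => ne_of_gt hy
    have hd' := hd.mono_left (nhdsWithin_mono x hsub)
    apply ge_of_tendsto hd'
    filter_upwards [self_mem_nhdsWithin] with y hy
    have hxy : x < y := hy
    rw [slope_def_field]
    apply div_nonneg _ (by linarith)
    have := hmono j (Set.mem_Ici.mpr hx) (Set.mem_Ici.mpr (by linarith : (0:ℝ) ≤ y)) hxy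
    linarith
  have hn : (0:ℝ) < (A.card : ℝ) - K := by
    have : (K:ℝ) < A.card := by exact_mod_cast hAK
    linarith
  have hθpos : 0 < θ := by
    rw [hθ]
    apply div_pos _ hn
    apply Finset.sum_pos _ ⟨a₀, ha₀A⟩
    intro a ha
    exact hder_pos a (z a) (by rw [hzA a ha]; exact hMpos)
  have hSigma : ∑ j ∈ A, deriv (g j) (z j) = θ * ((A.card : ℝ) - K) := by
    rw [hθ]; field_simp
  -- value of sumSmallest at z
  have hsumz : sumSmallest J K z = ∑ j, z j - K * M := by
    apply le_antisymm
    · obtain ⟨T, hTA, hT⟩ := Finset.exists_subset_card_eq (s := A) (n := K) hAK.le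
      have hle := sumSmallest_le (K := K) z (S := Tᶜ) (by rw [Finset.card_compl, hT]; simp)
      have h1 : ∑ i ∈ Tᶜ, z i + ∑ i ∈ T, z i = ∑ i, z i := Finset.sum_compl_add_sum T z
      have h2 : ∑ i ∈ T, z i = K * M := by
        rw [Finset.sum_congr rfl (fun i hi => hzA i (hTA hi)), Finset.sum_const, hT,
          nsmul_eq_mul]
      linarith
    · exact sumSmallest_ge hKJ z hMmax
  -- budget is tight
  have hG_eq : ∑ j, g j (z j) = G := by
    by_contra hne
    have hlt : ∑ j, g j (z j) < G := lt_of_le_of_ne hzG hne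
    have hcont : Continuous (fun ε : ℝ => ∑ j : Fin J, g j (z j + ε)) :=
      continuous_finset_sum _ fun j _ =>
        (hdiff j).continuous.comp (continuous_const.add continuous_id)
    have h0 : Filter.Tendsto (fun ε : ℝ => ∑ j : Fin J, g j (z j + ε)) (nhds 0)
        (nhds (∑ j : Fin J, g j (z j + 0))) := hcont.tendsto 0
    have h0' : (∑ j : Fin J, g j (z j + 0)) < G := by simpa using hlt
    have hev : ∀ᶠ ε in nhdsWithin (0:ℝ) (Set.Ioi 0), (∑ j : Fin J, g j (z j + ε)) < G :=
      (h0.eventually_lt_const h0').filter_mono nhdsWithin_le_nhds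
    obtain ⟨ε, hεG, hε⟩ := (hev.and self_mem_nhdsWithin).exists
    have hε0 : (0:ℝ) < ε := hε
    set w : Fin J → ℝ := fun j => z j + ε with hw
    have hwfeas : w ∈ Feasible J g G :=
      ⟨fun j => add_nonneg (hz0 j) hε0.le, hεG.le⟩
    have hub : ∀ j, w j ≤ M + ε := fun j => by
      simp only [hw]
      linarith [hMmax j]
    have hge := sumSmallest_ge hKJ w hub
    have hsum : ∑ j, w j = ∑ j, z j + J * ε := by
      simp only [hw]
      rw [Finset.sum_add_distrib, Finset.sum_const, Finset.card_univ]
      simp [nsmul_eq_mul]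
    have hcontra := hmax w hwfeas
    rw [hsumz] at hcontra
    have hJK : (0:ℝ) < (J:ℝ) - K := by
      have : (K:ℝ) < J := by exact_mod_cast hK
      linarith
    nlinarith
  -- KKT conditions
  have hkkt₁ : ∀ b, z b < M → θ ≤ deriv (g b) (z b) := by
    intro b hbM
    by_contra hge
    push_neg at hge
    set gb := deriv (g b) (z b) with hgbdef
    clear_value gb
    set n : ℝ := (A.card : ℝ) - K with hndef
    clear_value n
    set c : ℝ := n + n * (θ - gb) / θ with hcdef
    clear_value c
    have hbA : b ∉ A := (hnotA b).mpr hbM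
    have hcn : n < c := by
      rw [hcdef]
      have : 0 < n * (θ - gb) / θ :=
        div_pos (mul_pos hn (sub_pos.mpr hge)) hθpos
      linarith
    have hcpos : 0 < c := lt_trans hn hcn
    have hc2 : c * gb < θ * n := by
      have key : c * gb - θ * n = -(n * (θ - gb)^2 / θ) := by
        rw [hcdef]
        field_simp
        ring
      have hpos : 0 < n * (θ - gb)^2 / θ :=
        div_pos (mul_pos hn (pow_pos (sub_pos.mpr hge) 2)) hθpos
      linarith
    set d : Fin J → ℝ := fun j => if j ∈ A then -1 else if j = b then c else 0 with hddef
    clear_value d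
    set φ : ℝ → ℝ := fun s => ∑ j, g j (z j + s * d j) with hφdef
    clear_value φ
    have hφ0 : φ 0 = G := by
      simp only [hφdef, zero_mul, add_zero]
      exact hG_eq
    have hderφ : HasDerivAt φ (∑ j, deriv (g j) (z j) * d j) 0 := by
      rw [hφdef]
      apply HasDerivAt.fun_sum
      intro j _
      have hu : HasDerivAt (fun s : ℝ => z j + s * d j) (d j) 0 := by
        simpa using ((hasDerivAt_id (0:ℝ)).mul_const (d j)).const_add (z j)
      have hcomp := ((hdiff j (z j + 0 * d j)).hasDerivAt).comp 0 hu
      simpa [Function.comp_def] using hcomp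
    have hD : (∑ j, deriv (g j) (z j) * d j) < 0 := by
      have h1 : ∑ j ∈ A, deriv (g j) (z j) * d j = -(∑ j ∈ A, deriv (g j) (z j)) := by
        rw [← Finset.sum_neg_distrib]
        apply Finset.sum_congr rfl
        intro j hj
        simp [hddef, hj]
      have h2 : ∑ j ∈ Aᶜ, deriv (g j) (z j) * d j = gb * c := by
        rw [Finset.sum_eq_single_of_mem b (Finset.mem_compl.mpr hbA)]
        · simp [hddef, hbA, hgbdef]
        · intro j hj hjb
          simp [hddef, Finset.mem_compl.mp hj, hjb]
      rw [← Finset.sum_add_sum_compl A, h1, h2, hSigma]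
      nlinarith
    -- choose small s
    have hbAc : b ∈ Aᶜ := Finset.mem_compl.mpr hbA
    set δ : ℝ := (Aᶜ).inf' ⟨b, hbAc⟩ (fun j => M - z j) with hδdef
    clear_value δ
    have hδpos : 0 < δ := by
      rw [hδdef]
      apply (Finset.lt_inf'_iff _).mpr
      intro j hj
      have := (hnotA j).mp (Finset.mem_compl.mp hj)
      linarith
    set ε₀ : ℝ := min (δ / (c + 1)) M with hε₀def
    clear_value ε₀
    have hε₀pos : 0 < ε₀ := by
      rw [hε₀def]
      exact lt_min (div_pos hδpos (by linarith : (0:ℝ) < c + 1)) hMpos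
    have hslope := hasDerivAt_iff_tendsto_slope.mp hderφ
    have hsub : Set.Ioi (0:ℝ) ⊆ {(0:ℝ)}ᶜ := fun y hy => ne_of_gt hy
    have hev1 : ∀ᶠ s in nhdsWithin (0:ℝ) (Set.Ioi 0), slope φ 0 s < 0 :=
      (hslope.mono_left (nhdsWithin_mono 0 hsub)).eventually_lt_const hD
    have hev2 : ∀ᶠ s in nhdsWithin (0:ℝ) (Set.Ioi 0), s ∈ Set.Ioo (0:ℝ) ε₀ :=
      Filter.eventually_of_mem (Ioo_mem_nhdsGT hε₀pos) (fun x hx => hx)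
    obtain ⟨s, hs1, hs2⟩ := (hev1.and hev2).exists
    have hspos : 0 < s := hs2.1
    have hsε : s < ε₀ := hs2.2
    have hφs : φ s < G := by
      rw [slope_def_field, hφ0, sub_zero] at hs1
      rcases div_neg_iff.mp hs1 with ⟨h1', h2'⟩ | ⟨h1', h2'⟩
      · linarith
      · linarith
    set w : Fin J → ℝ := fun j => z j + s * d j with hwdef
    clear_value w
    have hwnn : ∀ j, 0 ≤ w j := by
      intro j
      by_cases hjA : j ∈ A
      · have hMs : s < M := by
          have h := hsε
          rw [hε₀def] at h
          exact lt_of_lt_of_le h (min_le_right _ _)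
        have := hzA j hjA
        simp only [hwdef, hddef, if_pos hjA]
        nlinarith
      · by_cases hjb : j = b
        · simp only [hwdef, hddef, if_neg hjA, if_pos hjb]
          subst hjb
          nlinarith [hz0 j]
        · simp only [hwdef, hddef, if_neg hjA, if_neg hjb]
          simpa using hz0 j
    have hcost : ∑ j, g j (w j) = φ s := by
      simp only [hwdef, hφdef]
    have hwfeas : w ∈ Feasible J g G := ⟨hwnn, by rw [hcost]; exact hφs.le⟩
    have hub : ∀ j, w j ≤ M - s := by
      intro j
      by_cases hjA : j ∈ A
      · simp only [hwdef, hddef, if_pos hjA]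
        rw [hzA j hjA]
        nlinarith
      · have hδle : δ ≤ M - z j := by
          rw [hδdef]
          exact Finset.inf'_le _ (Finset.mem_compl.mpr hjA)
        have hsc : s * (c + 1) < δ := by
          have : s < δ / (c + 1) := by
            have h := hsε
            rw [hε₀def] at h
            exact lt_of_lt_of_le h (min_le_left _ _)
          rw [lt_div_iff₀ (by linarith : (0:ℝ) < c + 1)] at this
          exact this
        have hdj : d j ≤ c := by
          by_cases hjb : j = b
          · subst hjb
            simp [hddef, hjA]
          · simp [hddef, hjA, hjb]
            linarith
        have : s * d j ≤ s * c := mul_le_mul_of_nonneg_left hdj hspos.le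
        simp only [hwdef]
        nlinarith
    have hgesum := sumSmallest_ge hKJ w hub
    have hsumd : ∑ j, d j = c - A.card := by
      have h1 : ∑ j ∈ A, d j = -(A.card : ℝ) := by
        rw [Finset.sum_congr rfl (fun j hj => by simp [hddef, hj] : ∀ j ∈ A, d j = -1)]
        simp
      have h2 : ∑ j ∈ Aᶜ, d j = c := by
        rw [Finset.sum_eq_single_of_mem b hbAc]
        · simp [hddef, hbA]
        · intro j hj hjb
          simp [hddef, Finset.mem_compl.mp hj, hjb]
      rw [← Finset.sum_add_sum_compl A, h1, h2]
      ring
    have hsumw : ∑ j, w j = ∑ j, z j + s * (c - A.card) := by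
      simp only [hwdef]
      rw [Finset.sum_add_distrib, ← Finset.mul_sum, hsumd]
    have hcontra := hmax w hwfeas
    rw [hsumz] at hcontra
    have hfinal : 0 < s * (c - n) := mul_pos hspos (by linarith)
    rw [hndef] at hfinal
    linarith [hgesum, hsumw, hcontra, hfinal]
  have hkkt₂ : ∀ b, z b < M → 0 < z b → deriv (g b) (z b) ≤ θ := by
    intro b hbM hzb
    by_contra hge
    push_neg at hge
    set gb := deriv (g b) (z b) with hgbdef
    clear_value gb
    have hgbpos : 0 < gb := lt_trans hθpos hge
    set n : ℝ := (A.card : ℝ) - K with hndef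
    clear_value n
    set c : ℝ := n * (θ + gb) / (2 * gb) with hcdef
    clear_value c
    have hbA : b ∉ A := (hnotA b).mpr hbM
    have hcpos : 0 < c := by
      rw [hcdef]
      apply div_pos (mul_pos hn (by linarith)) (by linarith)
    have hcn : c < n := by
      rw [hcdef]
      rw [div_lt_iff₀ (by linarith : (0:ℝ) < 2 * gb)]
      nlinarith
    have hc2 : θ * n < c * gb := by
      have key : c * gb = n * (θ + gb) / 2 := by
        rw [hcdef]
        field_simp
      rw [key]
      nlinarith
    set d : Fin J → ℝ := fun j => if j ∈ A then 1 else if j = b then -c else 0 with hddef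
    clear_value d
    set φ : ℝ → ℝ := fun s => ∑ j, g j (z j + s * d j) with hφdef
    clear_value φ
    have hφ0 : φ 0 = G := by
      simp only [hφdef, zero_mul, add_zero]
      exact hG_eq
    have hderφ : HasDerivAt φ (∑ j, deriv (g j) (z j) * d j) 0 := by
      rw [hφdef]
      apply HasDerivAt.fun_sum
      intro j _
      have hu : HasDerivAt (fun s : ℝ => z j + s * d j) (d j) 0 := by
        simpa using ((hasDerivAt_id (0:ℝ)).mul_const (d j)).const_add (z j)
      have hcomp := ((hdiff j (z j + 0 * d j)).hasDerivAt).comp 0 hu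
      simpa [Function.comp_def] using hcomp
    have hbAc : b ∈ Aᶜ := Finset.mem_compl.mpr hbA
    have hD : (∑ j, deriv (g j) (z j) * d j) < 0 := by
      have h1 : ∑ j ∈ A, deriv (g j) (z j) * d j = ∑ j ∈ A, deriv (g j) (z j) := by
        apply Finset.sum_congr rfl
        intro j hj
        simp [hddef, hj]
      have h2 : ∑ j ∈ Aᶜ, deriv (g j) (z j) * d j = gb * (-c) := by
        rw [Finset.sum_eq_single_of_mem b hbAc]
        · simp [hddef, hbA, hgbdef]
        · intro j hj hjb
          simp [hddef, Finset.mem_compl.mp hj, hjb]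
      rw [← Finset.sum_add_sum_compl A, h1, h2, hSigma]
      nlinarith
    set ε₀ : ℝ := z b / c with hε₀def
    clear_value ε₀
    have hε₀pos : 0 < ε₀ := by
      rw [hε₀def]
      exact div_pos hzb hcpos
    have hslope := hasDerivAt_iff_tendsto_slope.mp hderφ
    have hsub : Set.Ioi (0:ℝ) ⊆ {(0:ℝ)}ᶜ := fun y hy => ne_of_gt hy
    have hev1 : ∀ᶠ s in nhdsWithin (0:ℝ) (Set.Ioi 0), slope φ 0 s < 0 :=
      (hslope.mono_left (nhdsWithin_mono 0 hsub)).eventually_lt_const hD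
    have hev2 : ∀ᶠ s in nhdsWithin (0:ℝ) (Set.Ioi 0), s ∈ Set.Ioo (0:ℝ) ε₀ :=
      Filter.eventually_of_mem (Ioo_mem_nhdsGT hε₀pos) (fun x hx => hx)
    obtain ⟨s, hs1, hs2⟩ := (hev1.and hev2).exists
    have hspos : 0 < s := hs2.1
    have hsε : s < ε₀ := hs2.2
    have hscb : c * s < z b := by
      have h := hsε
      rw [hε₀def, lt_div_iff₀ hcpos] at h
      linarith
    have hφs : φ s < G := by
      rw [slope_def_field, hφ0, sub_zero] at hs1
      rcases div_neg_iff.mp hs1 with ⟨h1', h2'⟩ | ⟨h1', h2'⟩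
      · linarith
      · linarith
    set w : Fin J → ℝ := fun j => z j + s * d j with hwdef
    clear_value w
    have hwnn : ∀ j, 0 ≤ w j := by
      intro j
      by_cases hjA : j ∈ A
      · rw [hwdef]
        simp only [hddef, if_pos hjA]
        nlinarith [hz0 j]
      · by_cases hjb : j = b
        · subst hjb
          rw [hwdef]
          simp [hddef, hjA]
          nlinarith [hscb]
        · rw [hwdef]
          simp only [hddef, if_neg hjA, if_neg hjb]
          simpa using hz0 j
    have hcost : ∑ j, g j (w j) = φ s := by
      simp only [hwdef, hφdef]
    have hwfeas : w ∈ Feasible J g G := ⟨hwnn, by rw [hcost]; exact hφs.le⟩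
    have hub : ∀ j, w j ≤ M + s := by
      intro j
      by_cases hjA : j ∈ A
      · rw [hwdef]
        simp only [hddef, if_pos hjA]
        rw [hzA j hjA]
        nlinarith
      · have hjM : z j ≤ M := hMmax j
        have hdj : d j ≤ 0 := by
          by_cases hjb : j = b
          · subst hjb
            simp [hddef, hjA]
            linarith
          · simp [hddef, hjA, hjb]
        have : s * d j ≤ 0 := mul_nonpos_of_nonneg_of_nonpos hspos.le hdj
        rw [hwdef]
        simp only
        nlinarith
    have hgesum := sumSmallest_ge hKJ w hub
    have hsumd : ∑ j, d j = (A.card : ℝ) - c := by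
      have h1 : ∑ j ∈ A, d j = (A.card : ℝ) := by
        rw [Finset.sum_congr rfl (fun j hj => by simp [hddef, hj] : ∀ j ∈ A, d j = 1)]
        simp
      have h2 : ∑ j ∈ Aᶜ, d j = -c := by
        rw [Finset.sum_eq_single_of_mem b hbAc]
        · simp [hddef, hbA]
        · intro j hj hjb
          simp [hddef, Finset.mem_compl.mp hj, hjb]
      rw [← Finset.sum_add_sum_compl A, h1, h2]
      ring
    have hsumw : ∑ j, w j = ∑ j, z j + s * ((A.card : ℝ) - c) := by
      rw [hwdef]
      rw [Finset.sum_add_distrib, ← Finset.mul_sum, hsumd]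
    have hcontra := hmax w hwfeas
    rw [hsumz] at hcontra
    have hfinal : 0 < s * (n - c) := mul_pos hspos (by linarith)
    rw [hndef] at hfinal
    linarith [hgesum, hsumw, hcontra, hfinal]
  -- Part 1: best response
  have hcoef : ∀ a, θ * (1 - p a) = deriv (g a) (z a) := by
    intro a
    rw [hp a]
    field_simp
    ring
  have hBθ : ∀ b ∈ B, deriv (g b) (z b) = θ := by
    intro b hb
    obtain ⟨h1, h2⟩ := (hBmem b).mp hb
    exact le_antisymm (hkkt₂ b h2 h1) (hkkt₁ b h2)
  have hCθ : ∀ i ∈ C, θ ≤ deriv (g i) (z i) := by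
    intro i hi
    apply hkkt₁
    rw [(hCmem i).mp hi]
    exact hMpos
  have part1 : ∀ w ∈ Feasible J g G,
      ∑ a ∈ A, (1 - p a) * w a + ∑ b ∈ B, w b + ∑ c ∈ C, w c ≤
      ∑ a ∈ A, (1 - p a) * z a + ∑ b ∈ B, z b + ∑ c ∈ C, z c := by
    intro w hw
    have hw0 : ∀ j, 0 ≤ w j := hw.1
    have hwG : ∑ j, g j (w j) ≤ G := hw.2
    have hgradsum : ∑ j, deriv (g j) (z j) * (w j - z j) ≤ 0 := by
      have h2 : ∑ j, (g j (z j) + deriv (g j) (z j) * (w j - z j)) ≤ ∑ j, g j (w j) :=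
        Finset.sum_le_sum (fun j _ =>
          grad_ineq (hconv j).convexOn (hdiff j) (hz0 j) (hw0 j))
      rw [Finset.sum_add_distrib] at h2
      linarith [hwG, hG_eq]
    apply (mul_le_mul_iff_right₀ hθpos).mp
    have ew : ∀ v : Fin J → ℝ,
        θ * (∑ a ∈ A, (1 - p a) * v a + ∑ b ∈ B, v b + ∑ c ∈ C, v c) =
        ∑ a ∈ A, deriv (g a) (z a) * v a + ∑ b ∈ B, θ * v b + ∑ c ∈ C, θ * v c := by
      intro v
      rw [mul_add, mul_add, Finset.mul_sum, Finset.mul_sum, Finset.mul_sum]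
      congr 1
      congr 1
      apply Finset.sum_congr rfl
      intro a _
      rw [← mul_assoc, hcoef a]
    rw [ew w, ew z]
    have hBw : ∑ b ∈ B, θ * w b = ∑ b ∈ B, deriv (g b) (z b) * w b :=
      Finset.sum_congr rfl (fun b hb => by rw [hBθ b hb])
    have hBz : ∑ b ∈ B, θ * z b = ∑ b ∈ B, deriv (g b) (z b) * z b :=
      Finset.sum_congr rfl (fun b hb => by rw [hBθ b hb])
    have hCw : ∑ i ∈ C, θ * w i ≤ ∑ i ∈ C, deriv (g i) (z i) * w i :=
      Finset.sum_le_sum (fun i hi =>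
        mul_le_mul_of_nonneg_right (hCθ i hi) (hw0 i))
    have hCz : ∑ i ∈ C, θ * z i = ∑ i ∈ C, deriv (g i) (z i) * z i := by
      apply Finset.sum_congr rfl
      intro i hi
      rw [(hCmem i).mp hi]
      ring
    rw [hBw, hBz, hCz]
    have hsw := hsplit (fun j => deriv (g j) (z j) * w j)
    have hsz := hsplit (fun j => deriv (g j) (z j) * z j)
    have hdiff_sum : ∑ j, deriv (g j) (z j) * w j - ∑ j, deriv (g j) (z j) * z j ≤ 0 := by
      rw [← Finset.sum_sub_distrib]
      calc ∑ j, (deriv (g j) (z j) * w j - deriv (g j) (z j) * z j)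
          = ∑ j, deriv (g j) (z j) * (w j - z j) := by
            apply Finset.sum_congr rfl
            intro j _
            ring
        _ ≤ 0 := hgradsum
    linarith [hCw, hsw, hsz, hdiff_sum]
  -- the objective against q equals the ABC objective
  have key : ∀ w : Fin J → ℝ,
      ∑ S : Finset (Fin J), q S * ∑ j ∈ Sᶜ, w j =
      ∑ a ∈ A, (1 - p a) * w a + ∑ b ∈ B, w b + ∑ c ∈ C, w c := by
    intro w
    have h1 : ∀ S : Finset (Fin J), ∑ j ∈ Sᶜ, w j = ∑ j, w j - ∑ j ∈ S, w j := by
      intro S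
      rw [eq_sub_iff_add_eq]
      exact Finset.sum_compl_add_sum S w
    have inner : ∑ S : Finset (Fin J), q S * ∑ j ∈ S, w j = ∑ j ∈ A, p j * w j := by
      have e1 : ∀ S : Finset (Fin J), q S * ∑ j ∈ S, w j =
          ∑ j, (if j ∈ S then q S * w j else 0) := by
        intro S
        rw [Finset.mul_sum, ← Finset.sum_filter]
        congr 1
        simp
      rw [Finset.sum_congr rfl (fun S _ => e1 S), Finset.sum_comm]
      have e2 : ∀ j, ∑ S : Finset (Fin J), (if j ∈ S then q S * w j else 0)
          = (∑ S ∈ Finset.univ.filter (fun S : Finset (Fin J) => j ∈ S), q S) * w j := by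
        intro j
        rw [Finset.sum_filter, Finset.sum_mul]
        apply Finset.sum_congr rfl
        intro S _
        by_cases hjS : j ∈ S <;> simp [hjS]
      rw [Finset.sum_congr rfl (fun j _ => e2 j)]
      rw [← Finset.sum_subset (Finset.subset_univ A)]
      · apply Finset.sum_congr rfl
        intro a ha
        rw [hqmarg a ha]
      · intro j _ hjA
        have hz' : ∑ S ∈ Finset.univ.filter (fun S : Finset (Fin J) => j ∈ S), q S = 0 := by
          apply Finset.sum_eq_zero
          intro S hS
          by_contra hq
          exact hjA ((hqsupp S hq).2 (Finset.mem_filter.mp hS).2)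
        rw [hz', zero_mul]
    have h2 : ∑ S : Finset (Fin J), q S * ∑ j ∈ Sᶜ, w j
        = ∑ j, w j - ∑ j ∈ A, p j * w j := by
      calc ∑ S : Finset (Fin J), q S * ∑ j ∈ Sᶜ, w j
          = ∑ S : Finset (Fin J), (q S * ∑ j, w j - q S * ∑ j ∈ S, w j) := by
            apply Finset.sum_congr rfl
            intro S _
            rw [h1 S, mul_sub]
        _ = (∑ S : Finset (Fin J), q S) * ∑ j, w j
            - ∑ S : Finset (Fin J), q S * ∑ j ∈ S, w j := by
            rw [Finset.sum_sub_distrib, Finset.sum_mul]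
        _ = ∑ j, w j - ∑ j ∈ A, p j * w j := by
            rw [hq1, one_mul, inner]
    rw [h2, hsplit w]
    have h3 : ∑ a ∈ A, (1 - p a) * w a = ∑ a ∈ A, w a - ∑ a ∈ A, p a * w a := by
      rw [← Finset.sum_sub_distrib]
      apply Finset.sum_congr rfl
      intro a _
      ring
    rw [h3]
    ring
  refine ⟨part1, ?_, ?_⟩
  · intro w hw
    rw [key w, key z]
    exact part1 w hw
  · intro T hT
    rw [key z]
    have hTz : ∑ j ∈ T, z j ≤ K * M := by
      calc ∑ j ∈ T, z j ≤ T.card • M := Finset.sum_le_card_nsmul _ _ _ (fun i _ => hMmax i)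
        _ = K * M := by rw [hT, nsmul_eq_mul]
    have hTc : ∑ j ∈ Tᶜ, z j = ∑ j, z j - ∑ j ∈ T, z j := by
      rw [eq_sub_iff_add_eq]
      exact Finset.sum_compl_add_sum T z
    have hpsum : ∑ a ∈ A, p a = K := by
      calc ∑ a ∈ A, p a
          = ∑ a ∈ A, ∑ S ∈ Finset.univ.filter (fun S : Finset (Fin J) => a ∈ S), q S :=
            Finset.sum_congr rfl (fun a ha => (hqmarg a ha).symm)
        _ = ∑ a ∈ A, ∑ S : Finset (Fin J), if a ∈ S then q S else 0 := by
            apply Finset.sum_congr rfl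
            intro a _
            rw [Finset.sum_filter]
        _ = ∑ S : Finset (Fin J), ∑ a ∈ A, if a ∈ S then q S else 0 := Finset.sum_comm
        _ = ∑ S : Finset (Fin J), (K : ℝ) * q S := by
            apply Finset.sum_congr rfl
            intro S _
            rcases eq_or_ne (q S) 0 with h | h
            · simp [h]
            · obtain ⟨hSK, hSA⟩ := hqsupp S h
              rw [← Finset.sum_filter]
              have hfil : A.filter (fun a => a ∈ S) = S := by
                ext x
                simp only [Finset.mem_filter]
                exact ⟨fun hx => hx.2, fun hx => ⟨hSA hx, hx⟩⟩
              rw [hfil, Finset.sum_const, hSK, nsmul_eq_mul]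
        _ = K := by rw [← Finset.mul_sum, hq1, mul_one]
    have hpz : ∑ a ∈ A, p a * z a = K * M := by
      calc ∑ a ∈ A, p a * z a = ∑ a ∈ A, p a * M := by
            apply Finset.sum_congr rfl
            intro a ha
            rw [hzA a ha]
        _ = (∑ a ∈ A, p a) * M := by rw [Finset.sum_mul]
        _ = K * M := by rw [hpsum]
    have h3 : ∑ a ∈ A, (1 - p a) * z a = ∑ a ∈ A, z a - ∑ a ∈ A, p a * z a := by
      rw [← Finset.sum_sub_distrib]
      apply Finset.sum_congr rfl
      intro a _
      ring
    have hsz := hsplit z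
    rw [h3, hpz, hTc]
    linarith [hTz]
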